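/- Let F be a GIFS of order m on a complete metric space X with attractor A_F. Then for every k ∈ ℕ, A_F = ⋃_{α ∈ ₖΩ} A_α, where A_α := f_α(A_F,k-fold product). -/

import Mathlib

open TopologicalSpace Filter Metric

/-- The code space levels for a GIFS: `GifsCode n m k` represents `ₖ₊₁Ω`
(sequences `(α¹,...,α^{k+1})` with `α¹ ∈ {1,...,n}`, `α^{s+1} ∈ Ω_s^m`), in the
tree representation `ₖ₊₁Ω ≅ Ω₁ × (ₖΩ)^m`. -/
def GifsCode (n m : ℕ) : ℕ → Type
  | 0 => Fin n
  | k + 1 => Fin n × (Fin m → GifsCode n m k)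

/-- The iterated product spaces: `GifsSp X m k` represents `X_{k+1}`,
where `X_1 = X^m` and `X_{k+1} = X_k^m`. -/
def GifsSp (X : Type*) (m : ℕ) : ℕ → Type _
  | 0 => Fin m → X
  | k + 1 => Fin m → GifsSp X m k

/-- The iterated maps `f_α : X_{k+1} → X` for `α ∈ ₖ₊₁Ω`, defined by
`f_{(α¹,...,α^{k+1})}(x₁,...,x_m) = f_{α¹}(f_{α(1)}(x₁),...,f_{α(m)}(x_m))`. -/
def gifsIter {X : Type*} {n m : ℕ} (f : Fin n → (Fin m → X) → X) :
    ∀ k, GifsCode n m k → GifsSp X m k → X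
  | 0, a, x => f a x
  | k + 1, a, x => f a.1 (fun i => gifsIter f k (a.2 i) (x i))

/-- The iterated product sets `D_{k+1} ⊆ X_{k+1}`: `D_1 = D^m`, `D_{k+1} = D_k^m`. -/
def gifsProdSet {X : Type*} {m : ℕ} (D : Set X) : ∀ k, Set (GifsSp X m k)
  | 0 => Set.pi Set.univ (fun _ : Fin m => D)
  | k + 1 => Set.pi Set.univ (fun _ : Fin m => gifsProdSet D k)

/-- For a GIFS with attractor `A_F`, for every level `k` one has
`A_F = ⋃_{α ∈ ₖΩ} A_α` where `A_α = f_α((A_F)_k)`.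
(The index `k : ℕ` corresponds to the paper's level `k+1`.) -/
theorem stmt9 {X : Type*} [MetricSpace X] [CompleteSpace X]
    {n m : ℕ} (hn : 0 < n)
    (φ : ℝ → ℝ) (hφ_mono : MonotoneOn φ (Set.Ici 0))
    (hφ_nonneg : ∀ t, 0 ≤ t → 0 ≤ φ t)
    (hφ_iter : ∀ t > 0, Tendsto (fun k => φ^[k] t) atTop (nhds 0))
    (f : Fin n → (Fin m → X) → X)
    (hf : ∀ i, ∀ x y : Fin m → X, dist (f i x) (f i y) ≤ φ (dist x y))
    (A : NonemptyCompacts X)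
    (hA : (A : Set X) = ⋃ i, f i '' Set.pi Set.univ (fun _ : Fin m => (A : Set X))) :
    ∀ k, (A : Set X) =
      ⋃ α : GifsCode n m k, gifsIter f k α '' gifsProdSet (A : Set X) k := by
  intro k
  induction k with
  | zero => exact hA
  | succ k ih =>
    ext y
    simp only [Set.mem_iUnion, Set.mem_image]
    constructor
    · intro hy
      rw [hA] at hy
      simp only [Set.mem_iUnion, Set.mem_image] at hy
      obtain ⟨i, z, hz, rfl⟩ := hy
      have hz' : ∀ j : Fin m, ∃ α : GifsCode n m k, ∃ x ∈ gifsProdSet (A : Set X) k,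
          gifsIter f k α x = z j := by
        intro j
        have := hz j (Set.mem_univ j)
        rw [ih] at this
        simpa [Set.mem_iUnion, Set.mem_image] using this
      choose α x hx hfx using hz'
      refine ⟨(i, α), x, ?_, ?_⟩
      · intro j _
        exact hx j
      · show f i _ = f i z
        congr 1
        funext j
        exact hfx j
    · rintro ⟨⟨i, α⟩, x, hx, rfl⟩
      rw [hA]
      simp only [Set.mem_iUnion, Set.mem_image]
      refine ⟨i, fun j => gifsIter f k (α j) (x j), ?_, rfl⟩
      intro j _
      rw [ih]
      simp only [Set.mem_iUnion, Set.mem_image]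
      exact ⟨α j, x j, hx j (Set.mem_univ j), rfl⟩
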